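/- arXiv:1011.3059 — 2 statements merged into one kernel-verified Lean document; each statement's English description precedes it below -/
import Mathlib

section
/- In 2D with σ₀ ≡ 1 and U_j = e_j (so u_j = x_j), suppose v_1, v_2, ρ ∈ C³(Ω) satisfy 2∂v_1/∂x_1 + ρ = g_{1,1}, 2∂v_2/∂x_2 + ρ = g_{2,2}, ∂v_1/∂x_2 + ∂v_2/∂x_1 = g_{1,2}, and Δv_j = -∂ρ/∂x_j for j=1,2. Then Δρ = ½(∂²/∂x_1² - ∂²/∂x_2²)(g_{2,2} - g_{1,1}) - 2 ∂²g_{1,2}/∂x_1∂x_2. -/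
noncomputable section

/-- Partial derivative in the `i`-th coordinate direction. -/
def pd {n : ℕ} (i : Fin n) (f : EuclideanSpace ℝ (Fin n) → ℝ)
    (x : EuclideanSpace ℝ (Fin n)) : ℝ :=
  fderiv ℝ f x (EuclideanSpace.single i 1)

variable {n : ℕ} {f g : EuclideanSpace ℝ (Fin n) → ℝ} {x : EuclideanSpace ℝ (Fin n)}
  {Ω : Set (EuclideanSpace ℝ (Fin n))} {i j : Fin n}

lemma pd_congr (hΩ : IsOpen Ω) (hx : x ∈ Ω) (h : ∀ y ∈ Ω, f y = g y) :
    pd i f x = pd i g x := by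
  unfold pd
  congr 1
  apply Filter.EventuallyEq.fderiv_eq
  filter_upwards [hΩ.mem_nhds hx] with y hy using h y hy

lemma pd_contDiffAt {m k : ℕ} (hf : ContDiffAt ℝ m f x) (hmk : k + 1 ≤ m) :
    ContDiffAt ℝ k (pd i f) x := by
  have h := hf.fderiv_right (m := k) (by exact_mod_cast hmk)
  exact h.clm_apply contDiffAt_const

lemma pd_differentiableAt {m : ℕ} (hf : ContDiffAt ℝ m f x) (hm : 2 ≤ m) :
    DifferentiableAt ℝ (pd i f) x :=
  (pd_contDiffAt (k := 1) hf (by omega)).differentiableAt (by norm_num)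

lemma pd_sub (hf : DifferentiableAt ℝ f x) (hg : DifferentiableAt ℝ g x) :
    pd i (fun y => f y - g y) x = pd i f x - pd i g x := by
  unfold pd; rw [fderiv_fun_sub hf hg]; rfl

lemma pd_add (hf : DifferentiableAt ℝ f x) (hg : DifferentiableAt ℝ g x) :
    pd i (fun y => f y + g y) x = pd i f x + pd i g x := by
  unfold pd; rw [fderiv_fun_add hf hg]; rfl

lemma pd_const_mul (c : ℝ) (hf : DifferentiableAt ℝ f x) :
    pd i (fun y => c * f y) x = c * pd i f x := by
  unfold pd; rw [fderiv_const_mul hf]; rfl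

lemma pd_neg : pd i (fun y => -(f y)) x = - pd i f x := by
  unfold pd; rw [fderiv_fun_neg]; rfl

lemma pd_swap (hf : ContDiffAt ℝ 2 f x) : pd i (pd j f) x = pd j (pd i f) x := by
  have hd : DifferentiableAt ℝ (fderiv ℝ f) x :=
    (hf.fderiv_right (m := 1) le_rfl).differentiableAt (by norm_num)
  have key : ∀ (k : Fin n) (w), pd k (fun y => fderiv ℝ f y w) x
      = fderiv ℝ (fderiv ℝ f) x (EuclideanSpace.single k 1) w := by
    intro k w
    unfold pd
    rw [fderiv_clm_apply hd (differentiableAt_const w)]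
    simp
  have h1 : pd i (pd j f) x
      = fderiv ℝ (fderiv ℝ f) x (EuclideanSpace.single i 1) (EuclideanSpace.single j 1) :=
    key _ _
  have h2 : pd j (pd i f) x
      = fderiv ℝ (fderiv ℝ f) x (EuclideanSpace.single j 1) (EuclideanSpace.single i 1) :=
    key _ _
  rw [h1, h2, (hf.isSymmSndFDerivAt (by norm_num)).eq]

/-- In 2D with `σ₀ ≡ 1` and `U_j = e_j`, if `v_1, v_2, ρ ∈ C³(Ω)` satisfy the linearized
system `2∂v_1/∂x_1 + ρ = g_{1,1}`, `2∂v_2/∂x_2 + ρ = g_{2,2}`,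
`∂v_1/∂x_2 + ∂v_2/∂x_1 = g_{1,2}`, and `Δv_j = -∂ρ/∂x_j`, then
`Δρ = ½(∂²_{x_1} - ∂²_{x_2})(g_{2,2} - g_{1,1}) - 2 ∂²g_{1,2}/∂x_1∂x_2`. -/
theorem stmt4 (Ω : Set (EuclideanSpace ℝ (Fin 2))) (hΩ : IsOpen Ω)
    (v₁ v₂ ρ g₁₁ g₂₂ g₁₂ : EuclideanSpace ℝ (Fin 2) → ℝ)
    (hv₁ : ContDiffOn ℝ 3 v₁ Ω) (hv₂ : ContDiffOn ℝ 3 v₂ Ω) (hρ : ContDiffOn ℝ 3 ρ Ω)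
    (hg₁₁ : ContDiffOn ℝ 2 g₁₁ Ω) (hg₂₂ : ContDiffOn ℝ 2 g₂₂ Ω) (hg₁₂ : ContDiffOn ℝ 2 g₁₂ Ω)
    (h1 : ∀ x ∈ Ω, 2 * pd 0 v₁ x + ρ x = g₁₁ x)
    (h2 : ∀ x ∈ Ω, 2 * pd 1 v₂ x + ρ x = g₂₂ x)
    (h3 : ∀ x ∈ Ω, pd 1 v₁ x + pd 0 v₂ x = g₁₂ x)
    (h4 : ∀ x ∈ Ω, pd 0 (pd 0 v₁) x + pd 1 (pd 1 v₁) x = - pd 0 ρ x)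
    (h5 : ∀ x ∈ Ω, pd 0 (pd 0 v₂) x + pd 1 (pd 1 v₂) x = - pd 1 ρ x) :
    ∀ x ∈ Ω,
      pd 0 (pd 0 ρ) x + pd 1 (pd 1 ρ) x
        = (1/2) * (pd 0 (pd 0 (fun y => g₂₂ y - g₁₁ y)) x
            - pd 1 (pd 1 (fun y => g₂₂ y - g₁₁ y)) x)
          - 2 * pd 0 (pd 1 g₁₂) x := by
  intro x hx
  -- smoothness facts
  have cv₁ : ∀ y ∈ Ω, ContDiffAt ℝ ((3:ℕ):ℕ∞) v₁ y := fun y hy => by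
    exact_mod_cast hv₁.contDiffAt (hΩ.mem_nhds hy)
  have cv₂ : ∀ y ∈ Ω, ContDiffAt ℝ ((3:ℕ):ℕ∞) v₂ y := fun y hy => by
    exact_mod_cast hv₂.contDiffAt (hΩ.mem_nhds hy)
  have cρ : ∀ y ∈ Ω, ContDiffAt ℝ ((3:ℕ):ℕ∞) ρ y := fun y hy => by
    exact_mod_cast hρ.contDiffAt (hΩ.mem_nhds hy)
  -- first derivatives are C²
  have dpv₁ : ∀ i, ∀ y ∈ Ω, ContDiffAt ℝ ((2:ℕ):ℕ∞) (pd i v₁) y := fun i y hy =>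
    pd_contDiffAt (cv₁ y hy) (by norm_num)
  have dpv₂ : ∀ i, ∀ y ∈ Ω, ContDiffAt ℝ ((2:ℕ):ℕ∞) (pd i v₂) y := fun i y hy =>
    pd_contDiffAt (cv₂ y hy) (by norm_num)
  have dpρ : ∀ i, ∀ y ∈ Ω, ContDiffAt ℝ ((2:ℕ):ℕ∞) (pd i ρ) y := fun i y hy =>
    pd_contDiffAt (cρ y hy) (by norm_num)
  -- first derivatives differentiable
  have d1v₁ : ∀ i, ∀ y ∈ Ω, DifferentiableAt ℝ (pd i v₁) y := fun i y hy =>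
    pd_differentiableAt (cv₁ y hy) (by norm_num)
  have d1v₂ : ∀ i, ∀ y ∈ Ω, DifferentiableAt ℝ (pd i v₂) y := fun i y hy =>
    pd_differentiableAt (cv₂ y hy) (by norm_num)
  -- second derivatives differentiable
  have d2v₁ : ∀ i j, ∀ y ∈ Ω, DifferentiableAt ℝ (pd i (pd j v₁)) y := fun i j y hy =>
    pd_differentiableAt (dpv₁ j y hy) (by norm_num)
  have d2v₂ : ∀ i j, ∀ y ∈ Ω, DifferentiableAt ℝ (pd i (pd j v₂)) y := fun i j y hy =>
    pd_differentiableAt (dpv₂ j y hy) (by norm_num)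
  -- ∂₁ g₁₂ on Ω
  have k3 : ∀ y ∈ Ω, pd 1 g₁₂ y = pd 1 (pd 1 v₁) y + pd 1 (pd 0 v₂) y := by
    intro y hy
    rw [pd_congr hΩ hy (fun z hz => (h3 z hz).symm), pd_add (d1v₁ 1 y hy) (d1v₂ 0 y hy)]
  have K3 : pd 0 (pd 1 g₁₂) x = pd 0 (pd 1 (pd 1 v₁)) x + pd 0 (pd 1 (pd 0 v₂)) x := by
    rw [pd_congr hΩ hx k3, pd_add (d2v₁ 1 1 x hx) (d2v₂ 1 0 x hx)]
  -- g₂₂ - g₁₁ on Ω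
  have k12 : ∀ y ∈ Ω, g₂₂ y - g₁₁ y = 2 * pd 1 v₂ y - 2 * pd 0 v₁ y := by
    intro y hy; have := h1 y hy; have := h2 y hy; linarith
  have kd : ∀ i : Fin 2, ∀ y ∈ Ω, pd i (fun z => g₂₂ z - g₁₁ z) y
      = 2 * pd i (pd 1 v₂) y - 2 * pd i (pd 0 v₁) y := by
    intro i y hy
    rw [pd_congr hΩ hy k12,
      pd_sub ((d1v₂ 1 y hy).const_mul 2) ((d1v₁ 0 y hy).const_mul 2),
      pd_const_mul 2 (d1v₂ 1 y hy), pd_const_mul 2 (d1v₁ 0 y hy)]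
  have K0 : pd 0 (pd 0 (fun y => g₂₂ y - g₁₁ y)) x
      = 2 * pd 0 (pd 0 (pd 1 v₂)) x - 2 * pd 0 (pd 0 (pd 0 v₁)) x := by
    rw [pd_congr hΩ hx (kd 0),
      pd_sub ((d2v₂ 0 1 x hx).const_mul 2) ((d2v₁ 0 0 x hx).const_mul 2),
      pd_const_mul 2 (d2v₂ 0 1 x hx), pd_const_mul 2 (d2v₁ 0 0 x hx)]
  have K1 : pd 1 (pd 1 (fun y => g₂₂ y - g₁₁ y)) x
      = 2 * pd 1 (pd 1 (pd 1 v₂)) x - 2 * pd 1 (pd 1 (pd 0 v₁)) x := by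
    rw [pd_congr hΩ hx (kd 1),
      pd_sub ((d2v₂ 1 1 x hx).const_mul 2) ((d2v₁ 1 0 x hx).const_mul 2),
      pd_const_mul 2 (d2v₂ 1 1 x hx), pd_const_mul 2 (d2v₁ 1 0 x hx)]
  -- Laplacian of ρ via h4, h5
  have kρ0 : ∀ y ∈ Ω, pd 0 ρ y = -(pd 0 (pd 0 v₁) y + pd 1 (pd 1 v₁) y) := by
    intro y hy; have := h4 y hy; linarith
  have kρ1 : ∀ y ∈ Ω, pd 1 ρ y = -(pd 0 (pd 0 v₂) y + pd 1 (pd 1 v₂) y) := by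
    intro y hy; have := h5 y hy; linarith
  have Kρ0 : pd 0 (pd 0 ρ) x = -(pd 0 (pd 0 (pd 0 v₁)) x + pd 0 (pd 1 (pd 1 v₁)) x) := by
    rw [pd_congr hΩ hx kρ0, pd_neg, pd_add (d2v₁ 0 0 x hx) (d2v₁ 1 1 x hx)]
  have Kρ1 : pd 1 (pd 1 ρ) x = -(pd 1 (pd 0 (pd 0 v₂)) x + pd 1 (pd 1 (pd 1 v₂)) x) := by
    rw [pd_congr hΩ hx kρ1, pd_neg, pd_add (d2v₂ 0 0 x hx) (d2v₂ 1 1 x hx)]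
  -- symmetry of second derivatives
  have sv₂ : ∀ y ∈ Ω, pd 0 (pd 1 v₂) y = pd 1 (pd 0 v₂) y := fun y hy =>
    pd_swap ((cv₂ y hy).of_le (by norm_num))
  have sv₁ : ∀ y ∈ Ω, pd 1 (pd 1 v₁) y = pd 1 (pd 1 v₁) y := fun y hy => rfl
  have a1 : pd 0 (pd 0 (pd 1 v₂)) x = pd 0 (pd 1 (pd 0 v₂)) x := pd_congr hΩ hx sv₂
  have a2 : pd 0 (pd 1 (pd 0 v₂)) x = pd 1 (pd 0 (pd 0 v₂)) x := pd_swap (dpv₂ 0 x hx)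
  have sv₁' : ∀ y ∈ Ω, pd 1 (pd 0 v₁) y = pd 0 (pd 1 v₁) y := fun y hy =>
    pd_swap ((cv₁ y hy).of_le (by norm_num))
  have b1 : pd 1 (pd 1 (pd 0 v₁)) x = pd 1 (pd 0 (pd 1 v₁)) x := pd_congr hΩ hx sv₁'
  have b2 : pd 1 (pd 0 (pd 1 v₁)) x = pd 0 (pd 1 (pd 1 v₁)) x := pd_swap (dpv₁ 1 x hx)
  rw [Kρ0, Kρ1, K0, K1, K3]
  linarith [a1, a2, b1, b2]


end
end

section
/- Let W : Ω → ℝ² be a nonvanishing C¹ vector field on Ω ⊂ ℝ², and σ a positive C² function satisfying ∇·(√σ W) = 0 and curl(W/√σ) = 0. Then ∇ ln σ = -(2/|W|²)( W^⊥ (∇×W) + W (∇·W) ), where W^⊥ is the counterclockwise 90° rotation of W and ∇×W := ∂W_2/∂x_1 - ∂W_1/∂x_2. -/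
open Real
open scoped RealInnerProductSpace

noncomputable section

def vdiv {n : ℕ} (F : EuclideanSpace ℝ (Fin n) → EuclideanSpace ℝ (Fin n))
    (x : EuclideanSpace ℝ (Fin n)) : ℝ :=
  ∑ i, fderiv ℝ F x (EuclideanSpace.single i 1) i

/-- The scalar 2D curl `∇×W = ∂W_2/∂x_1 - ∂W_1/∂x_2`. -/
def curl2 (F : EuclideanSpace ℝ (Fin 2) → EuclideanSpace ℝ (Fin 2))
    (x : EuclideanSpace ℝ (Fin 2)) : ℝ :=
  fderiv ℝ F x (EuclideanSpace.single 0 1) 1 - fderiv ℝ F x (EuclideanSpace.single 1 1) 0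

/-- Counterclockwise rotation by 90°: `(w₁,w₂) ↦ (-w₂,w₁)`. -/
def perp (w : EuclideanSpace ℝ (Fin 2)) : EuclideanSpace ℝ (Fin 2) :=
  EuclideanSpace.single 0 (-(w 1)) + EuclideanSpace.single 1 (w 0)

lemma coord_toDual_symm (ℓ : EuclideanSpace ℝ (Fin 2) →L[ℝ] ℝ) (i : Fin 2) :
    ((InnerProductSpace.toDual ℝ (EuclideanSpace ℝ (Fin 2))).symm ℓ) i
      = ℓ (EuclideanSpace.single i 1) := by
  have h := InnerProductSpace.toDual_symm_apply (𝕜 := ℝ)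
    (x := EuclideanSpace.single i (1:ℝ)) (y := ℓ)
  rwa [EuclideanSpace.inner_single_right, one_mul, RCLike.conj_to_real] at h

lemma lin_solve (a0 a1 w0 w1 c k d : ℝ) (hc : 0 < c) (hn : 0 < w0^2+w1^2)
    (h1 : a0 * w0 + a1 * w1 = -2 * c * d) (h2 : a0 * w1 - a1 * w0 = 2 * c * k) :
    c⁻¹ * a0 = (-(2/(w0^2+w1^2))) * (k * (-w1) + d * w0)
    ∧ c⁻¹ * a1 = (-(2/(w0^2+w1^2))) * (k * w0 + d * w1) := by
  constructor
  · field_simp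
    linear_combination w0 * h1 + w1 * h2
  · field_simp
    linear_combination w1 * h1 - w0 * h2

/-- Let `W` be a nonvanishing `C¹` vector field and `σ` a positive `C²` function with
`∇·(√σ W) = 0` and `curl(W/√σ) = 0`. Then
`∇ ln σ = -(2/|W|²)( W^⊥ (∇×W) + W (∇·W) )`. -/
theorem stmt7 (Ω : Set (EuclideanSpace ℝ (Fin 2))) (hΩ : IsOpen Ω)
    (W : EuclideanSpace ℝ (Fin 2) → EuclideanSpace ℝ (Fin 2))
    (σ : EuclideanSpace ℝ (Fin 2) → ℝ)
    (hW : ContDiff ℝ 1 W) (hWne : ∀ x ∈ Ω, W x ≠ 0)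
    (hσ : ContDiff ℝ 2 σ) (hσpos : ∀ x, 0 < σ x)
    (hdiv : ∀ x ∈ Ω, vdiv (fun y => Real.sqrt (σ y) • W y) x = 0)
    (hcurl : ∀ x ∈ Ω, curl2 (fun y => (Real.sqrt (σ y))⁻¹ • W y) x = 0) :
    ∀ x ∈ Ω,
      gradient (fun y => Real.log (σ y)) x
        = (-(2 / ‖W x‖ ^ 2)) • ((curl2 W x) • perp (W x) + (vdiv W x) • W x) := by
  intro x hx
  have hσd : DifferentiableAt ℝ σ x := (hσ.differentiable (by norm_num)).differentiableAt
  have hWd : DifferentiableAt ℝ W x := (hW.differentiable (by norm_num)).differentiableAt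
  have hc : (0:ℝ) < σ x := hσpos x
  set s : ℝ := Real.sqrt (σ x) with hs_def
  have hs : (0:ℝ) < s := Real.sqrt_pos.mpr hc
  have hcs : s ^ 2 = σ x := Real.sq_sqrt hc.le
  set a := fderiv ℝ σ x with ha
  set B := fderiv ℝ W x with hB
  have hsq : HasFDerivAt (fun y => Real.sqrt (σ y)) ((1 / (2 * s)) • a) x :=
    (Real.hasDerivAt_sqrt hc.ne').comp_hasFDerivAt x hσd.hasFDerivAt
  have hinv : HasFDerivAt (fun y => (Real.sqrt (σ y))⁻¹)
      ((-(s ^ 2)⁻¹) • ((1 / (2 * s)) • a)) x :=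
    (hasDerivAt_inv hs.ne').comp_hasFDerivAt x hsq
  have hlog : HasFDerivAt (fun y => Real.log (σ y)) ((σ x)⁻¹ • a) x := by
    have := (Real.hasDerivAt_log hc.ne').comp_hasFDerivAt x hσd.hasFDerivAt
    exact this
  set a0 := a (EuclideanSpace.single 0 1) with ha0
  set a1 := a (EuclideanSpace.single 1 1) with ha1
  set b00 := B (EuclideanSpace.single 0 1) 0 with hb00
  set b01 := B (EuclideanSpace.single 0 1) 1 with hb01
  set b10 := B (EuclideanSpace.single 1 1) 0 with hb10
  set b11 := B (EuclideanSpace.single 1 1) 1 with hb11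
  set w0 := W x 0 with hw0
  set w1 := W x 1 with hw1
  -- divergence equation
  have hD : HasFDerivAt (fun y => Real.sqrt (σ y) • W y)
      (s • B + ((1 / (2 * s)) • a).smulRight (W x)) x := hsq.smul hWd.hasFDerivAt
  have hE1 : (s * b00 + 1 / (2 * s) * a0 * w0) + (s * b11 + 1 / (2 * s) * a1 * w1) = 0 := by
    have h := hdiv x hx
    rw [vdiv, hD.fderiv, Fin.sum_univ_two] at h
    simpa [ContinuousLinearMap.smulRight_apply, PiLp.add_apply, PiLp.smul_apply,
      smul_eq_mul, mul_comm, mul_assoc, mul_left_comm] using h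
  -- curl equation
  have hC : HasFDerivAt (fun y => (Real.sqrt (σ y))⁻¹ • W y)
      (s⁻¹ • B + ((-(s ^ 2)⁻¹) • ((1 / (2 * s)) • a)).smulRight (W x)) x :=
    hinv.smul hWd.hasFDerivAt
  have hE2 : (s⁻¹ * b01 + (-(s ^ 2)⁻¹ * (1 / (2 * s))) * a0 * w1)
      - (s⁻¹ * b10 + (-(s ^ 2)⁻¹ * (1 / (2 * s))) * a1 * w0) = 0 := by
    have h := hcurl x hx
    rw [curl2, hC.fderiv] at h
    simpa [ContinuousLinearMap.smulRight_apply, PiLp.add_apply, PiLp.smul_apply,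
      smul_eq_mul, mul_comm, mul_assoc, mul_left_comm] using h
  have hE1' : a0 * w0 + a1 * w1 = -2 * σ x * (b00 + b11) := by
    field_simp at hE1
    linear_combination hE1 - 2*(b00+b11)*hcs
  have hE2' : a0 * w1 - a1 * w0 = 2 * σ x * (b01 - b10) := by
    field_simp at hE2
    have h2 : s * (a0 * w1 - a1 * w0) = s * (2 * s ^ 2 * (b01 - b10)) := by
      linear_combination -s * hE2
    have h3 := mul_left_cancel₀ hs.ne' h2
    linear_combination h3 + 2*(b01-b10)*hcs
  -- norm
  have hn : ‖W x‖ ^ 2 = w0 ^ 2 + w1 ^ 2 := by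
    rw [EuclideanSpace.norm_eq, Real.sq_sqrt (by positivity), Fin.sum_univ_two]
    simp [sq_abs]
    rfl
  have hnpos : (0:ℝ) < w0 ^ 2 + w1 ^ 2 := by
    rw [← hn]
    exact pow_pos (norm_pos_iff.mpr (hWne x hx)) 2
  obtain ⟨key0, key1⟩ :=
    lin_solve a0 a1 w0 w1 (σ x) (b01 - b10) (b00 + b11) hc hnpos hE1' hE2'
  have hvd : vdiv W x = b00 + b11 := by rw [vdiv, Fin.sum_univ_two]
  have hcu : curl2 W x = b01 - b10 := rfl
  have hgrad : gradient (fun y => Real.log (σ y)) x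
      = (InnerProductSpace.toDual ℝ (EuclideanSpace ℝ (Fin 2))).symm ((σ x)⁻¹ • a) := by
    rw [gradient, hlog.fderiv]
  rw [hgrad, hvd, hcu, hn]
  ext i
  rw [coord_toDual_symm, ContinuousLinearMap.smul_apply, smul_eq_mul]
  fin_cases i
  · simp [perp, PiLp.add_apply, PiLp.smul_apply, smul_eq_mul,
      EuclideanSpace.single_apply, ← ha0, ← hw0, ← hw1]
    rw [key0]; ring
  · simp [perp, PiLp.add_apply, PiLp.smul_apply, smul_eq_mul,
      EuclideanSpace.single_apply, ← ha1, ← hw0, ← hw1]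
    rw [key1]; ring

end
end
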